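/- For every finite acyclic digraph H (a digraph containing no directed cycle) there exists a finite simple graph G such that G ⇒ H. -/

import Mathlib

/-- An orientation of a simple graph `G`: an asymmetric relation `D` whose
symmetrization is exactly the adjacency relation of `G`. -/
def IsOrientation {V : Type*} (G : SimpleGraph V) (D : V → V → Prop) : Prop :=
  (∀ u v, ¬ (D u v ∧ D v u)) ∧ ∀ u v, G.Adj u v ↔ (D u v ∨ D v u)

/-- A digraph structure on a relation: no loops and no pairs of opposite arcs. -/
def IsDigraph {W : Type*} (E : W → W → Prop) : Prop :=
  ∀ u v, ¬ (E u v ∧ E v u)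

/-- `G ⇒ E`: every orientation `D` of `G` contains an isometric copy of the digraph `E`:
an injective map `f` inducing an isomorphism onto its image, preserving orientations,
such that distances (in the underlying undirected graphs) are preserved. -/
def IsoRamseyArrow {V W : Type*} (G : SimpleGraph V) (E : W → W → Prop) : Prop :=
  ∀ D : V → V → Prop, IsOrientation G D →
    ∃ f : W → V, Function.Injective f ∧
      (∀ u v, E u v ↔ D (f u) (f v)) ∧
      (∀ u v, (SimpleGraph.fromRel E).edist u v = G.edist (f u) (f v))

/-- A digraph is acyclic if it has no directed cycles, equivalently its transitive
closure is irreflexive. -/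
def DigraphAcyclic {W : Type*} (E : W → W → Prop) : Prop :=
  ∀ v, ¬ Relation.TransGen E v v


private lemma rank_exists {W : Type} [Fintype W] (E : W → W → Prop)
    (hacyc : ∀ v, ¬ Relation.TransGen E v v) :
    ∃ r : W → ℕ, ∀ u v, E u v → r u < r v := by
  classical
  refine ⟨fun u => (Finset.univ.filter (fun x => Relation.TransGen E x u)).card, ?_⟩
  intro u v huv
  apply Finset.card_lt_card
  rw [Finset.ssubset_def]
  constructor
  · intro x hx
    simp only [Finset.mem_filter, Finset.mem_univ, true_and] at hx ⊢
    exact hx.tail huv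
  · intro hsub
    have hu : u ∈ Finset.univ.filter (fun x => Relation.TransGen E x v) := by
      simp [Relation.TransGen.single huv]
    have := hsub hu
    simp only [Finset.mem_filter, Finset.mem_univ, true_and] at this
    exact hacyc u this

private lemma embed_exists {W : Type} [Fintype W] {M : ℕ}
    (R : Fin M → Fin M → Prop) (htot : ∀ c d, c ≠ d → R c d ∨ R d c)
    (ρ : W → ℕ) :
    ∀ (k : ℕ) (T : Finset W) (S : Finset (Fin M)), T.card = k → 2 ^ k ≤ S.card →
      ∃ q : W → Fin M, (∀ u ∈ T, q u ∈ S) ∧ Set.InjOn q ↑T ∧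
        ∀ u ∈ T, ∀ v ∈ T, ρ u < ρ v → R (q u) (q v) := by
  classical
  intro k
  induction k with
  | zero =>
    intro T S hT hS
    have hT0 : T = ∅ := Finset.card_eq_zero.mp hT
    obtain ⟨s0, hs0⟩ := Finset.card_pos.mp (lt_of_lt_of_le one_pos (by simpa using hS))
    subst hT0
    exact ⟨fun _ => s0, by simp, by simp, by simp⟩
  | succ k ih =>
    intro T S hT hS
    have hTne : T.Nonempty := Finset.card_pos.mp (by omega)
    have hSne : S.Nonempty := Finset.card_pos.mp (lt_of_lt_of_le (by positivity) hS)
    obtain ⟨v, hv⟩ := hSne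
    set Inn := S.filter (fun x => x ≠ v ∧ R x v) with hInn
    set Outt := S.filter (fun x => x ≠ v ∧ R v x) with hOutt
    have hcover : S.erase v ⊆ Inn ∪ Outt := by
      intro x hx
      obtain ⟨hxv, hxS⟩ := Finset.mem_erase.mp hx
      rcases htot x v hxv with h | h
      · exact Finset.mem_union_left _ (Finset.mem_filter.mpr ⟨hxS, hxv, h⟩)
      · exact Finset.mem_union_right _ (Finset.mem_filter.mpr ⟨hxS, hxv, h⟩)
    have hbig : 2 ^ k ≤ Inn.card ∨ 2 ^ k ≤ Outt.card := by
      by_contra hc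
      push_neg at hc
      have h1 := Finset.card_le_card hcover
      have h2 := Finset.card_union_le Inn Outt
      have h3 : (S.erase v).card = S.card - 1 := Finset.card_erase_of_mem hv
      have h4 : (2:ℕ) ^ (k+1) = 2 ^ k * 2 := pow_succ 2 k
      omega
    rcases hbig with hbig | hbig
    · -- put the ρ-maximal element of T on v; predecessors point into v
      obtain ⟨w, hwT, hwmax⟩ := T.exists_max_image ρ hTne
      have hT' : (T.erase w).card = k := by
        rw [Finset.card_erase_of_mem hwT]; omega
      obtain ⟨q', hq'mem, hq'inj, hq'chain⟩ := ih (T.erase w) Inn hT' hbig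
      refine ⟨fun u => if u = w then v else q' u, ?_, ?_, ?_⟩
      · intro u hu
        by_cases h : u = w
        · simpa [h] using hv
        · simp only [if_neg h]
          exact Finset.filter_subset _ _ (hq'mem u (Finset.mem_erase.mpr ⟨h, hu⟩))
      · intro a ha b hb hab
        dsimp only at hab
        simp only [Finset.coe_sort_coe, Finset.mem_coe] at ha hb
        by_cases h1 : a = w <;> by_cases h2 : b = w
        · rw [h1, h2]
        · exfalso
          rw [if_pos h1, if_neg h2] at hab
          have := hq'mem b (Finset.mem_erase.mpr ⟨h2, hb⟩)
          rw [hInn, Finset.mem_filter] at this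
          exact this.2.1 hab.symm
        · exfalso
          rw [if_neg h1, if_pos h2] at hab
          have := hq'mem a (Finset.mem_erase.mpr ⟨h1, ha⟩)
          rw [hInn, Finset.mem_filter] at this
          exact this.2.1 hab
        · rw [if_neg h1, if_neg h2] at hab
          exact hq'inj (by simp [Finset.mem_erase, h1, ha]) (by simp [Finset.mem_erase, h2, hb]) hab
      · intro a ha b hb hlt
        by_cases h1 : a = w
        · exfalso
          subst h1
          exact absurd (hwmax b hb) (by omega)
        by_cases h2 : b = w
        · subst h2
          simp only [if_neg h1, if_pos rfl]
          have := hq'mem a (Finset.mem_erase.mpr ⟨h1, ha⟩)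
          rw [hInn, Finset.mem_filter] at this
          exact this.2.2
        · simp only [if_neg h1, if_neg h2]
          exact hq'chain a (Finset.mem_erase.mpr ⟨h1, ha⟩) b (Finset.mem_erase.mpr ⟨h2, hb⟩) hlt
    · -- put the ρ-minimal element of T on v; v points into successors
      obtain ⟨w, hwT, hwmin⟩ := T.exists_min_image ρ hTne
      have hT' : (T.erase w).card = k := by
        rw [Finset.card_erase_of_mem hwT]; omega
      obtain ⟨q', hq'mem, hq'inj, hq'chain⟩ := ih (T.erase w) Outt hT' hbig
      refine ⟨fun u => if u = w then v else q' u, ?_, ?_, ?_⟩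
      · intro u hu
        by_cases h : u = w
        · simpa [h] using hv
        · simp only [if_neg h]
          exact Finset.filter_subset _ _ (hq'mem u (Finset.mem_erase.mpr ⟨h, hu⟩))
      · intro a ha b hb hab
        dsimp only at hab
        simp only [Finset.coe_sort_coe, Finset.mem_coe] at ha hb
        by_cases h1 : a = w <;> by_cases h2 : b = w
        · rw [h1, h2]
        · exfalso
          rw [if_pos h1, if_neg h2] at hab
          have := hq'mem b (Finset.mem_erase.mpr ⟨h2, hb⟩)
          rw [hOutt, Finset.mem_filter] at this
          exact this.2.1 hab.symm
        · exfalso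
          rw [if_neg h1, if_pos h2] at hab
          have := hq'mem a (Finset.mem_erase.mpr ⟨h1, ha⟩)
          rw [hOutt, Finset.mem_filter] at this
          exact this.2.1 hab
        · rw [if_neg h1, if_neg h2] at hab
          exact hq'inj (by simp [Finset.mem_erase, h1, ha]) (by simp [Finset.mem_erase, h2, hb]) hab
      · intro a ha b hb hlt
        by_cases h2 : b = w
        · exfalso
          subst h2
          exact absurd (hwmin a ha) (by omega)
        by_cases h1 : a = w
        · subst h1
          simp only [if_pos rfl, if_neg h2]
          have := hq'mem b (Finset.mem_erase.mpr ⟨h2, hb⟩)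
          rw [hOutt, Finset.mem_filter] at this
          exact this.2.2
        · simp only [if_neg h1, if_neg h2]
          exact hq'chain a (Finset.mem_erase.mpr ⟨h1, ha⟩) b (Finset.mem_erase.mpr ⟨h2, hb⟩) hlt

private lemma walk_proj {V W : Type} {G : SimpleGraph V} {A : SimpleGraph W}
    (ρ : V → W) (h : ∀ x y, G.Adj x y → ρ x = ρ y ∨ A.Adj (ρ x) (ρ y)) :
    ∀ {x y : V} (p : G.Walk x y), A.edist (ρ x) (ρ y) ≤ p.length := by
  intro x y p
  induction p with
  | nil => simp
  | @cons a b c hadj p ih =>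
    rw [SimpleGraph.Walk.length_cons]
    rcases h _ _ hadj with heq | hadj'
    · rw [heq]
      exact le_trans ih (by exact_mod_cast Nat.cast_le.mpr (Nat.le_succ _))
    · calc A.edist (ρ a) (ρ c) ≤ A.edist (ρ a) (ρ b) + A.edist (ρ b) (ρ c) :=
            SimpleGraph.edist_triangle
        _ ≤ 1 + p.length := add_le_add (le_of_eq (SimpleGraph.edist_eq_one_iff_adj.mpr hadj')) ih
        _ = ((p.length + 1 : ℕ) : ℕ∞) := by push_cast; ring

theorem stmt0 (W : Type) [Fintype W] (E : W → W → Prop)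
    (hE : IsDigraph E) (hacyc : DigraphAcyclic E) :
    ∃ (V : Type) (_ : Fintype V) (G : SimpleGraph V), IsoRamseyArrow G E := by
  classical
  rcases isEmpty_or_nonempty W with hW | hW
  · exact ⟨PUnit, inferInstance, ⊥, fun D hD =>
      ⟨fun w => isEmptyElim w, fun a => isEmptyElim a, fun u => isEmptyElim u,
        fun u => isEmptyElim u⟩⟩
  obtain ⟨w0⟩ := hW
  obtain ⟨r, hr⟩ := rank_exists E hacyc
  set n := Fintype.card W with hn
  set idx : W ≃ Fin n := Fintype.equivFin W with hidx
  set ρ : W → ℕ := fun u => r u * n + (idx u).val with hρ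
  have hρE : ∀ u v, E u v → ρ u < ρ v := by
    intro u v huv
    have h1 : (r u + 1) * n ≤ r v * n := Nat.mul_le_mul_right n (hr u v huv)
    rw [add_mul, one_mul] at h1
    have h2 := (idx u).isLt
    have h3 := (idx v).isLt
    simp only [hρ]
    omega
  set Arel : W → W → Prop := fun u v => E u v ∨ E v u with hArel
  have hAsymm : ∀ u v, Arel u v → Arel v u := fun u v h => h.symm
  have hAne : ∀ u v, Arel u v → u ≠ v := by
    rintro u v h rfl
    rcases h with h | h <;> exact hE u u ⟨h, h⟩
  set M := 2 ^ n with hM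
  let Sig := {t : Fin M → W // ∀ c d : Fin M, t c = t d ∨ Arel (t c) (t d)}
  have hSigne : Nonempty Sig := ⟨⟨fun _ => w0, fun c d => Or.inl rfl⟩⟩
  obtain ⟨ι, ιfin, hHJ⟩ :=
    Combinatorics.Line.exists_mono_in_high_dimension Sig (Fin M → Fin M → Bool)
  letI := ιfin
  set V := (Fin M) × (ι → W) with hV
  set G : SimpleGraph V :=
    { Adj := fun x y => x.1 ≠ y.1 ∧ ∀ i, x.2 i = y.2 i ∨ Arel (x.2 i) (y.2 i)
      symm := ⟨by
        rintro x y ⟨h1, h2⟩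
        exact ⟨h1.symm,
          fun i => (h2 i).elim (fun h => Or.inl h.symm) (fun h => Or.inr (hAsymm _ _ h))⟩⟩
      loopless := ⟨fun x h => h.1 rfl⟩ } with hG
  refine ⟨V, inferInstance, G, ?_⟩
  intro D hD
  set vtx : Fin M → (ι → Sig) → V := fun c ω => (c, fun i => (ω i).1 c) with hvtx
  have hvtxadj : ∀ (c d : Fin M), c ≠ d → ∀ ω, G.Adj (vtx c ω) (vtx d ω) := by
    intro c d hcd ω
    exact ⟨hcd, fun i => (ω i).2 c d⟩
  set κ : (ι → Sig) → (Fin M → Fin M → Bool) :=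
    fun ω c d => decide (D (vtx c ω) (vtx d ω)) with hκ
  obtain ⟨l, μ, hμ⟩ := hHJ κ
  have hμ' : ∀ (σ : Sig) (c d : Fin M),
      decide (D (vtx c (l σ)) (vtx d (l σ))) = μ c d := by
    intro σ c d
    have := congrFun (congrFun (hμ σ) c) d
    simpa [hκ] using this
  have htot : ∀ c d : Fin M, c ≠ d → μ c d = true ∨ μ d c = true := by
    intro c d hcd
    obtain ⟨σ0⟩ := hSigne
    have hadj := hvtxadj c d hcd (l σ0)
    rcases (hD.2 _ _).mp hadj with h | h
    · left; rw [← hμ' σ0 c d]; exact decide_eq_true h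
    · right; rw [← hμ' σ0 d c]; exact decide_eq_true h
  obtain ⟨q, hqS, hqinj, hqchain⟩ := embed_exists (fun c d => μ c d = true) htot ρ n
      Finset.univ Finset.univ (by simp [Finset.card_univ, hn]) (by simp [Finset.card_univ, hM])
  have hqinj' : Function.Injective q := by
    intro a b h
    exact hqinj (by simp) (by simp) h
  obtain ⟨i₀, hi₀⟩ := l.proper
  set f : W → V := fun u => (q u, fun i => (l.idxFun i).elim u (fun s => s.1 (q u))) with hf
  have hfsnd : ∀ u, (f u).2 i₀ = u := by
    intro u
    simp [hf, hi₀]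
  have hvtxf : ∀ u v : W, Arel u v →
      ∃ σ : Sig, vtx (q u) (l σ) = f u ∧ vtx (q v) (l σ) = f v := by
    intro u v hA
    have huv : u ≠ v := hAne u v hA
    have hquv : q u ≠ q v := fun hh => huv (hqinj' hh)
    refine ⟨⟨fun c => if c = q v then v else u, ?_⟩, ?_, ?_⟩
    · intro c d
      by_cases h1 : c = q v
      · by_cases h2 : d = q v
        · simp [h1, h2]
        · simp only [if_pos h1, if_neg h2]
          exact Or.inr (hAsymm u v hA)
      · by_cases h2 : d = q v
        · simp only [if_neg h1, if_pos h2]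
          exact Or.inr hA
        · simp [h1, h2]
    · refine Prod.ext_iff.mpr ⟨rfl, funext fun i => ?_⟩
      cases hopt : l.idxFun i with
      | none => simp [hvtx, hf, Combinatorics.Line.coe_apply, hopt, hquv]
      | some s => simp [hvtx, hf, Combinatorics.Line.coe_apply, hopt]
    · refine Prod.ext_iff.mpr ⟨rfl, funext fun i => ?_⟩
      cases hopt : l.idxFun i with
      | none => simp [hvtx, hf, Combinatorics.Line.coe_apply, hopt]
      | some s => simp [hvtx, hf, Combinatorics.Line.coe_apply, hopt]
  have hdir : ∀ u v : W, Arel u v → (D (f u) (f v) ↔ μ (q u) (q v) = true) := by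
    intro u v hA
    obtain ⟨σ, h1, h2⟩ := hvtxf u v hA
    rw [← h1, ← h2, ← hμ' σ (q u) (q v), decide_eq_true_eq]
  have hED : ∀ u v, E u v → D (f u) (f v) := by
    intro u v h
    exact (hdir u v (Or.inl h)).mpr (hqchain u (by simp) v (by simp) (hρE u v h))
  have hfinj : Function.Injective f := by
    intro a b h
    have := congrFun (congrArg Prod.snd h) i₀
    rwa [hfsnd, hfsnd] at this
  have hhom : ∀ u v : W, Arel u v → G.Adj (f u) (f v) := by
    intro u v hA
    refine ⟨fun hh => (hAne u v hA) (hqinj' hh), fun i => ?_⟩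
    rcases hopt : l.idxFun i with _ | s
    · simp only [hf, hopt, Option.elim_none]
      exact Or.inr hA
    · simp only [hf, hopt, Option.elim_some]
      exact s.2 (q u) (q v)
  have hiff : ∀ u v, E u v ↔ D (f u) (f v) := by
    intro u v
    refine ⟨hED u v, fun h => ?_⟩
    have hadj : G.Adj (f u) (f v) := (hD.2 _ _).mpr (Or.inl h)
    have hne : u ≠ v := by
      rintro rfl
      exact G.loopless.irrefl _ hadj
    have h2 := hadj.2 i₀
    rw [hfsnd, hfsnd] at h2
    rcases h2 with h2 | h2
    · exact absurd h2 hne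
    rcases h2 with h2 | h2
    · exact h2
    · exact absurd ⟨h, hED v u h2⟩ (hD.1 (f u) (f v))
  have hA'adj : ∀ u v, (SimpleGraph.fromRel E).Adj u v ↔ Arel u v := by
    intro u v
    rw [SimpleGraph.fromRel_adj]
    exact ⟨fun h => h.2, fun h => ⟨hAne u v h, h⟩⟩
  have hedist : ∀ u v, (SimpleGraph.fromRel E).edist u v = G.edist (f u) (f v) := by
    intro u v
    apply le_antisymm
    · by_cases htop : G.edist (f u) (f v) = ⊤
      · rw [htop]; exact le_top
      obtain ⟨p, hp⟩ := SimpleGraph.exists_walk_of_edist_ne_top htop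
      have hproj := walk_proj (G := G) (A := SimpleGraph.fromRel E)
        (fun x => x.2 i₀) ?_ p
      · rw [hfsnd, hfsnd] at hproj
        rw [← hp]
        exact hproj
      · intro x y hxy
        rcases hxy.2 i₀ with hh | hh
        · exact Or.inl hh
        · exact Or.inr ((hA'adj _ _).mpr hh)
    · by_cases htop : (SimpleGraph.fromRel E).edist u v = ⊤
      · rw [htop]; exact le_top
      obtain ⟨p, hp⟩ := SimpleGraph.exists_walk_of_edist_ne_top htop
      have hle : G.edist (f u) (f v) ≤
          (p.map ⟨f, fun {a b} hab => hhom a b ((hA'adj a b).mp hab)⟩).length :=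
        SimpleGraph.edist_le _
      rw [SimpleGraph.Walk.length_map] at hle
      rw [← hp]
      exact hle
  exact ⟨f, hfinj, hiff, hedist⟩
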